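/- arXiv:2205.04867 — 2 statements merged into one kernel-verified Lean document; each statement's English description precedes it below -/
import Mathlib

section
/- Let 0 < q < 1, let n ≥ 1 be an integer, and let a, b be nonzero real numbers such that a·q^j ≠ 1 and b·q^j ≠ 1 for all integers j ≥ 1. Then for all x > 0 with x·q^k ≠ 1 for all integers k ≥ 0, the q-derivative at x of the function G(x) := ( a·b·q²·(1−q) / ((1−aq)(1−bq)) ) · ( (x/(bq); q)_∞·(x/(aq); q)_∞ / (x; q)_∞ ) · p_{n−1}(x; aq, bq; q) equals ( (x/b; q)_∞·(x/a; q)_∞ / (x; q)_∞ ) · p_n(x; a, b; q). (This is the indefinite q-integral ∫ w(x;a,b;q)·p_n(x;a,b;q) d_q x = (abq²(1−q)/((1−aq)(1−bq)))·w(x;aq,bq;q)·p_{n−1}(x;aq,bq;q).) -/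
/-- The Jackson `q`-derivative `(D_q f)(x) = (f(x) - f(qx)) / ((1-q)x)`. -/
noncomputable def qDeriv (q : ℝ) (f : ℝ → ℝ) (x : ℝ) : ℝ :=
  (f x - f (q * x)) / ((1 - q) * x)

/-- The finite q-shifted factorial `(z; q)_k`. -/
noncomputable def qPoch (z q : ℝ) (k : ℕ) : ℝ :=
  ∏ j ∈ Finset.range k, (1 - z * q ^ j)

/-- The infinite q-shifted factorial `(z; q)_∞`. -/
noncomputable def qPochInf (z q : ℝ) : ℝ :=
  ∏' j : ℕ, (1 - z * q ^ j)

/-- The big q-Laguerre polynomial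
`p_n(x; a, b; q) = Σ_{k=0}^n (q^{−n};q)_k (x;q)_k q^k / ((q;q)_k (aq;q)_k (bq;q)_k)`. -/
noncomputable def bigQLaguerre (q a b : ℝ) (n : ℕ) (x : ℝ) : ℝ :=
  ∑ k ∈ Finset.range (n + 1),
    (qPoch ((q : ℝ) ^ (-(n : ℤ))) q k * qPoch x q k * q ^ k) /
      (qPoch q q k * qPoch (a * q) q k * qPoch (b * q) q k)

/-! ### finite q-Pochhammer lemmas -/

lemma qPoch_zero (z q : ℝ) : qPoch z q 0 = 1 := by simp [qPoch]

lemma qPoch_succ (z q : ℝ) (k : ℕ) : qPoch z q (k+1) = qPoch z q k * (1 - z * q ^ k) := by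
  simp [qPoch, Finset.prod_range_succ]

lemma qPoch_succ' (z q : ℝ) (k : ℕ) : qPoch z q (k+1) = (1 - z) * qPoch (q*z) q k := by
  rw [qPoch, Finset.prod_range_succ']
  simp only [pow_zero, mul_one, qPoch]
  rw [mul_comm]
  congr 1
  exact Finset.prod_congr rfl (fun j _ => by ring_nf)

lemma qPoch_rel (z q : ℝ) (k : ℕ) :
    (1 - z) * qPoch (q*z) q k = qPoch z q k * (1 - z * q ^ k) := by
  rw [← qPoch_succ', qPoch_succ]

/-- tail q-Pochhammer product over `[k, N)`. -/
noncomputable def qPochT (z q : ℝ) (k N : ℕ) : ℝ :=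
  ∏ j ∈ Finset.Ico k N, (1 - z * q ^ j)

lemma qPochT_peel (z q : ℝ) {k N : ℕ} (h : k < N) :
    qPochT z q k N = (1 - z * q ^ k) * qPochT z q (k+1) N :=
  Finset.prod_eq_prod_Ico_succ_bot h _

lemma qPoch_bridge (z q : ℝ) {k N : ℕ} (h : k ≤ N) :
    qPoch z q N = qPoch z q k * qPochT z q k N :=
  (Finset.prod_range_mul_prod_Ico _ h).symm

/-! ### shift gadget -/

noncomputable def sh (g : ℕ → ℝ) : ℕ → ℝ
  | 0 => 0
  | m+1 => g m

@[simp] lemma sh_zero (g : ℕ → ℝ) : sh g 0 = 0 := rfl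
@[simp] lemma sh_succ (g : ℕ → ℝ) (m : ℕ) : sh g (m+1) = g m := rfl

lemma sum_sh (g φ : ℕ → ℝ) (N : ℕ) :
    ∑ m ∈ Finset.range (N+1), sh g m * φ m = ∑ k ∈ Finset.range N, g k * φ (k+1) := by
  rw [Finset.sum_range_succ']
  simp

lemma sum_sh2 (g φ : ℕ → ℝ) (N : ℕ) :
    ∑ m ∈ Finset.range (N+2), sh (sh g) m * φ m = ∑ k ∈ Finset.range N, g k * φ (k+2) := by
  rw [show N+2 = (N+1)+1 from rfl, Finset.sum_range_succ']
  simp only [sh_succ, sh_zero, zero_mul, add_zero]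
  rw [Finset.sum_range_succ']
  simp only [sh_succ, sh_zero, zero_mul, add_zero]

/-! ### coefficient functions -/

noncomputable def czr (q a b s : ℝ) (n k : ℕ) : ℝ :=
  qPoch s q k * qPochT q q k (n+2) * qPochT (a*q) q k (n+3) * qPochT (b*q) q k (n+3)

noncomputable def dzr (q a b s : ℝ) (n k : ℕ) : ℝ :=
  qPoch s q k * (1 - s*q^k) * ((1-a*q)*(1-b*q)) * qPochT q q k (n+2)
    * qPochT (a*q) q (k+1) (n+3) * qPochT (b*q) q (k+1) (n+3)

noncomputable def w1 (q a b s : ℝ) (n k : ℕ) : ℝ :=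
  dzr q a b s n k * (q*(a*b*(q^k)^2*q^2 - (a+b)*q^k*q + 1)) / (q^k*q)

noncomputable def w2 (q a b s : ℝ) (n k : ℕ) : ℝ :=
  dzr q a b s n k * ((a+b)*q^k*q^2 - q - 1 - a*b*(q^k)^2*q^3) / (q^k*q)

noncomputable def w3 (q a b s : ℝ) (n k : ℕ) : ℝ :=
  dzr q a b s n k / (q^k*q)

noncomputable def rc (q a b s : ℝ) (n k : ℕ) : ℝ :=
  (1-a*q)*(1-b*q)*(1-s) * czr q a b s n k

set_option maxHeartbeats 1000000 in
lemma star (q a b x : ℝ) (hq : 0 < q) (hq1 : q < 1) (n : ℕ) (hn : 1 ≤ n)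
    (ha : ∀ j : ℕ, 1 ≤ j → a * q ^ j ≠ 1) (hb : ∀ j : ℕ, 1 ≤ j → b * q ^ j ≠ 1) :
    (a*q - x)*(b*q - x) * bigQLaguerre q (a*q) (b*q) (n-1) x
      - a*b*q^2*((1-x) * bigQLaguerre q (a*q) (b*q) (n-1) (q*x))
    = (1-a*q)*(1-b*q) * (x * bigQLaguerre q a b n x) := by
  have hq0 : q ≠ 0 := ne_of_gt hq
  have hqk0 : ∀ k : ℕ, (q:ℝ)^k ≠ 0 := fun k => pow_ne_zero k hq0
  have hqk1 : ∀ k : ℕ, 1 ≤ k → (1:ℝ) - q^k ≠ 0 := by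
    intro k hk
    have : q^k < 1 := pow_lt_one₀ hq.le hq1 (by omega)
    intro h; nlinarith
  have hQf : ∀ j : ℕ, (1:ℝ) - q*q^j ≠ 0 := by
    intro j
    have := hqk1 (j+1) (by omega)
    rwa [pow_succ', ] at this
  have hAf : ∀ j : ℕ, (1:ℝ) - a*q*q^j ≠ 0 := by
    intro j
    have h := ha (j+1) (by omega)
    rw [pow_succ'] at h
    intro hc; apply h; rw [← mul_assoc]; linarith
  have hBf : ∀ j : ℕ, (1:ℝ) - b*q*q^j ≠ 0 := by
    intro j
    have h := hb (j+1) (by omega)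
    rw [pow_succ'] at h
    intro hc; apply h; rw [← mul_assoc]; linarith
  have hQk : ∀ k : ℕ, qPoch q q k ≠ 0 := by
    intro k
    exact Finset.prod_ne_zero_iff.mpr fun j _ => hQf j
  have hAk : ∀ k : ℕ, qPoch (a*q) q k ≠ 0 := by
    intro k
    refine Finset.prod_ne_zero_iff.mpr fun j _ => ?_
    have := hAf j; intro hc; apply this; linarith
  have hBk : ∀ k : ℕ, qPoch (b*q) q k ≠ 0 := by
    intro k
    refine Finset.prod_ne_zero_iff.mpr fun j _ => ?_
    have := hBf j; intro hc; apply this; linarith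
  set s : ℝ := (q:ℝ) ^ (-(n:ℤ)) with hsdef
  have hsn : s * q^n = 1 := by
    rw [hsdef, ← zpow_natCast q n, ← zpow_add₀ hq0]
    simp
  have hs1 : (1:ℝ) - s ≠ 0 := by
    have h1 : q^n < 1 := pow_lt_one₀ hq.le hq1 (by omega)
    have h2 : (0:ℝ) < q^n := pow_pos hq n
    have : 1 < s := by nlinarith
    intro h; nlinarith
  have hzs : (q:ℝ) ^ (-((n-1:ℕ):ℤ)) = q * s := by
    rw [hsdef, show -((n-1:ℕ):ℤ) = 1 + -(n:ℤ) by
      have : ((n-1:ℕ):ℤ) = (n:ℤ) - 1 := by push_cast [hn]; ring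
      omega]
    rw [zpow_add₀ hq0, zpow_one]
  have hE0 : qPoch s q (n+1) = 0 := by
    apply Finset.prod_eq_zero (Finset.self_mem_range_succ n)
    rw [sub_eq_zero, hsn]
  have hdzrn : dzr q a b s n n = 0 := by
    unfold dzr
    rw [sub_eq_zero.mpr hsn.symm]
    ring
  have hdzrn1 : dzr q a b s n (n+1) = 0 := by
    unfold dzr; rw [hE0]; ring
  have hczrn1 : czr q a b s n (n+1) = 0 := by
    unfold czr; rw [hE0]; ring
  set M : ℝ := (1-s) * qPoch q q (n+2) * qPoch (a*q) q (n+3) * qPoch (b*q) q (n+3) with hMdef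
  have hM : M ≠ 0 := by
    apply mul_ne_zero (mul_ne_zero (mul_ne_zero hs1 (hQk _)) (hAk _)) (hBk _)
  have haq1 : (1:ℝ) - a*q ≠ 0 := by have := hAf 0; simpa using this
  have hbq1 : (1:ℝ) - b*q ≠ 0 := by have := hBf 0; simpa using this
  have hA2k : ∀ k : ℕ, qPoch (a*q*q) q k ≠ 0 := by
    intro k
    refine Finset.prod_ne_zero_iff.mpr fun j _ => ?_
    have := hAf (j+1); rw [pow_succ'] at this
    intro hc; apply this; linarith
  have hB2k : ∀ k : ℕ, qPoch (b*q*q) q k ≠ 0 := by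
    intro k
    refine Finset.prod_ne_zero_iff.mpr fun j _ => ?_
    have := hBf (j+1); rw [pow_succ'] at this
    intro hc; apply this; linarith
  -- coefficient conversions
  have hd : ∀ k : ℕ, k < n →
      M * (qPoch (q*s) q k * q^k / (qPoch q q k * qPoch (a*q*q) q k * qPoch (b*q*q) q k))
        = dzr q a b s n k * q^k := by
    intro k hk
    have e1 : qPoch (q*s) q k = qPoch s q k * (1 - s*q^k) / (1-s) := by
      rw [eq_div_iff hs1, mul_comm, qPoch_rel]
    have e2 : qPoch (a*q*q) q k = qPoch (a*q) q (k+1) / (1-a*q) := by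
      have h := qPoch_rel (a*q) q k
      rw [show q*(a*q) = a*q*q from by ring] at h
      rw [eq_div_iff haq1, qPoch_succ]
      linear_combination h
    have e3 : qPoch (b*q*q) q k = qPoch (b*q) q (k+1) / (1-b*q) := by
      have h := qPoch_rel (b*q) q k
      rw [show q*(b*q) = b*q*q from by ring] at h
      rw [eq_div_iff hbq1, qPoch_succ]
      linear_combination h
    have bq' : qPoch q q (n+2) = qPoch q q k * qPochT q q k (n+2) :=
      qPoch_bridge q q (by omega)
    have ba' : qPoch (a*q) q (n+3) = qPoch (a*q) q (k+1) * qPochT (a*q) q (k+1) (n+3) :=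
      qPoch_bridge (a*q) q (by omega)
    have bb' : qPoch (b*q) q (n+3) = qPoch (b*q) q (k+1) * qPochT (b*q) q (k+1) (n+3) :=
      qPoch_bridge (b*q) q (by omega)
    rw [hMdef, e1, e2, e3, bq', ba', bb']
    unfold dzr
    field_simp [hQk k, hAk (k+1), hBk (k+1), (by rw [mul_comm q b]; exact hBk (k+1) : qPoch (q*b) q (k+1) ≠ 0)]
  have hc : ∀ k : ℕ, k < n+1 →
      M * (qPoch s q k * q^k / (qPoch q q k * qPoch (a*q) q k * qPoch (b*q) q k))
        = (1-s) * czr q a b s n k * q^k := by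
    intro k hk
    have bq' : qPoch q q (n+2) = qPoch q q k * qPochT q q k (n+2) :=
      qPoch_bridge q q (by omega)
    have ba' : qPoch (a*q) q (n+3) = qPoch (a*q) q k * qPochT (a*q) q k (n+3) :=
      qPoch_bridge (a*q) q (by omega)
    have bb' : qPoch (b*q) q (n+3) = qPoch (b*q) q k * qPochT (b*q) q k (n+3) :=
      qPoch_bridge (b*q) q (by omega)
    rw [hMdef, bq', ba', bb']
    unfold czr
    field_simp [hQk k, hAk k, hBk k, (by rw [mul_comm q b]; exact hBk k : qPoch (q*b) q k ≠ 0)]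
  -- sum representations
  have RepC : M * bigQLaguerre q (a*q) (b*q) (n-1) x
      = ∑ k ∈ Finset.range n, dzr q a b s n k * q^k * qPoch x q k := by
    unfold bigQLaguerre
    rw [Nat.sub_add_cancel hn, hzs, Finset.mul_sum]
    refine Finset.sum_congr rfl fun k hk => ?_
    rw [← hd k (Finset.mem_range.mp hk)]
    ring
  have RepB : M * ((1-x) * bigQLaguerre q (a*q) (b*q) (n-1) (q*x))
      = ∑ k ∈ Finset.range n, dzr q a b s n k * q^k * qPoch x q (k+1) := by
    unfold bigQLaguerre
    rw [Nat.sub_add_cancel hn, hzs, Finset.mul_sum, Finset.mul_sum]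
    refine Finset.sum_congr rfl fun k hk => ?_
    have hx1 : (1-x) * qPoch (q*x) q k = qPoch x q (k+1) := (qPoch_succ' x q k).symm
    calc M * ((1-x) * (qPoch (q*s) q k * qPoch (q*x) q k * q^k /
          (qPoch q q k * qPoch (a*q*q) q k * qPoch (b*q*q) q k)))
        = M * (qPoch (q*s) q k * q^k / (qPoch q q k * qPoch (a*q*q) q k * qPoch (b*q*q) q k))
            * ((1-x) * qPoch (q*x) q k) := by ring
      _ = dzr q a b s n k * q^k * qPoch x q (k+1) := by
          rw [hd k (Finset.mem_range.mp hk), hx1]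
  have RepA : M * bigQLaguerre q a b n x
      = ∑ k ∈ Finset.range (n+1), (1-s) * czr q a b s n k * q^k * qPoch x q k := by
    unfold bigQLaguerre
    rw [← hsdef, Finset.mul_sum]
    refine Finset.sum_congr rfl fun k hk => ?_
    rw [← hc k (Finset.mem_range.mp hk)]
    ring
  -- main computation
  apply mul_left_cancel₀ hM
  have hL : M * ((a*q - x)*(b*q - x) * bigQLaguerre q (a*q) (b*q) (n-1) x
      - a*b*q^2*((1-x) * bigQLaguerre q (a*q) (b*q) (n-1) (q*x)))
      = ∑ m ∈ Finset.range (n+2),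
          (w1 q a b s n m + sh (w2 q a b s n) m + sh (sh (w3 q a b s n)) m) * qPoch x q m := by
    have step1 : M * ((a*q - x)*(b*q - x) * bigQLaguerre q (a*q) (b*q) (n-1) x
        - a*b*q^2*((1-x) * bigQLaguerre q (a*q) (b*q) (n-1) (q*x)))
        = (a*q - x)*(b*q - x) * (M * bigQLaguerre q (a*q) (b*q) (n-1) x)
          - a*b*q^2 * (M * ((1-x) * bigQLaguerre q (a*q) (b*q) (n-1) (q*x))) := by ring
    rw [step1, RepC, RepB, Finset.mul_sum, Finset.mul_sum, ← Finset.sum_sub_distrib]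
    have step2 : ∀ k ∈ Finset.range n,
        (a*q - x)*(b*q - x) * (dzr q a b s n k * q^k * qPoch x q k)
          - a*b*q^2 * (dzr q a b s n k * q^k * qPoch x q (k+1))
        = w1 q a b s n k * qPoch x q k + (w2 q a b s n k * qPoch x q (k+1)
            + w3 q a b s n k * qPoch x q (k+2)) := by
      intro k _
      unfold w1 w2 w3
      simp only [qPoch_succ]
      field_simp
      ring
    rw [Finset.sum_congr rfl step2, Finset.sum_add_distrib]
    have p1 : ∑ k ∈ Finset.range (n+2), w1 q a b s n k * qPoch x q k
        = ∑ k ∈ Finset.range n, w1 q a b s n k * qPoch x q k := by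
      rw [show n+2 = (n+1)+1 from rfl, Finset.sum_range_succ, Finset.sum_range_succ]
      simp [w1, hdzrn, hdzrn1]
    have p2 : ∑ k ∈ Finset.range (n+1), w2 q a b s n k * qPoch x q (k+1)
        = ∑ k ∈ Finset.range n, w2 q a b s n k * qPoch x q (k+1) := by
      rw [Finset.sum_range_succ]
      simp [w2, hdzrn]
    have split : ∀ m ∈ Finset.range (n+2),
        (w1 q a b s n m + sh (w2 q a b s n) m + sh (sh (w3 q a b s n)) m) * qPoch x q m
        = w1 q a b s n m * qPoch x q m + (sh (w2 q a b s n) m * qPoch x q m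
            + sh (sh (w3 q a b s n)) m * qPoch x q m) := fun m _ => by ring
    have lhs_eq : ∑ k ∈ Finset.range n, (w1 q a b s n k * qPoch x q k
          + (w2 q a b s n k * qPoch x q (k+1) + w3 q a b s n k * qPoch x q (k+2)))
        = (∑ k ∈ Finset.range n, w1 q a b s n k * qPoch x q k)
          + ((∑ k ∈ Finset.range n, w2 q a b s n k * qPoch x q (k+1))
            + (∑ k ∈ Finset.range n, w3 q a b s n k * qPoch x q (k+2))) := by
      rw [Finset.sum_add_distrib, Finset.sum_add_distrib]
    have rhs_eq : ∑ m ∈ Finset.range (n+2),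
          (w1 q a b s n m + sh (w2 q a b s n) m + sh (sh (w3 q a b s n)) m) * qPoch x q m
        = (∑ m ∈ Finset.range (n+2), w1 q a b s n m * qPoch x q m)
          + ((∑ m ∈ Finset.range (n+2), sh (w2 q a b s n) m * qPoch x q m)
            + (∑ m ∈ Finset.range (n+2), sh (sh (w3 q a b s n)) m * qPoch x q m)) := by
      rw [Finset.sum_congr rfl split, Finset.sum_add_distrib, Finset.sum_add_distrib]
    have q2 : ∑ m ∈ Finset.range (n+2), sh (w2 q a b s n) m * qPoch x q m
        = ∑ k ∈ Finset.range n, w2 q a b s n k * qPoch x q (k+1) := by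
      rw [show n+2 = (n+1)+1 from rfl, sum_sh (w2 q a b s n) (fun m => qPoch x q m) (n+1)]
      exact p2
    have q3 : ∑ m ∈ Finset.range (n+2), sh (sh (w3 q a b s n)) m * qPoch x q m
        = ∑ k ∈ Finset.range n, w3 q a b s n k * qPoch x q (k+2) :=
      sum_sh2 (w3 q a b s n) (fun m => qPoch x q m) n
    rw [rhs_eq, p1, q2, q3, Finset.sum_add_distrib]
  have hR : M * ((1-a*q)*(1-b*q) * (x * bigQLaguerre q a b n x))
      = ∑ m ∈ Finset.range (n+2),
          (rc q a b s n m - sh (rc q a b s n) m) * qPoch x q m := by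
    have step1 : M * ((1-a*q)*(1-b*q) * (x * bigQLaguerre q a b n x))
        = (1-a*q)*(1-b*q) * x * (M * bigQLaguerre q a b n x) := by ring
    rw [step1, RepA, Finset.mul_sum]
    have step2 : ∀ k ∈ Finset.range (n+1),
        (1-a*q)*(1-b*q) * x * ((1-s) * czr q a b s n k * q^k * qPoch x q k)
        = rc q a b s n k * qPoch x q k - rc q a b s n k * qPoch x q (k+1) := by
      intro k _
      unfold rc
      rw [qPoch_succ]
      ring
    rw [Finset.sum_congr rfl step2, Finset.sum_sub_distrib]
    have p1 : ∑ k ∈ Finset.range (n+2), rc q a b s n k * qPoch x q k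
        = ∑ k ∈ Finset.range (n+1), rc q a b s n k * qPoch x q k := by
      rw [show n+2 = (n+1)+1 from rfl, Finset.sum_range_succ]
      simp [rc, hczrn1]
    have split : ∀ m ∈ Finset.range (n+2),
        (rc q a b s n m - sh (rc q a b s n) m) * qPoch x q m
        = rc q a b s n m * qPoch x q m - sh (rc q a b s n) m * qPoch x q m :=
      fun m _ => by ring
    have rhs_eq : ∑ m ∈ Finset.range (n+2),
          (rc q a b s n m - sh (rc q a b s n) m) * qPoch x q m
        = (∑ m ∈ Finset.range (n+2), rc q a b s n m * qPoch x q m)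
          - (∑ m ∈ Finset.range (n+2), sh (rc q a b s n) m * qPoch x q m) := by
      rw [Finset.sum_congr rfl split, Finset.sum_sub_distrib]
    have q2 : ∑ m ∈ Finset.range (n+2), sh (rc q a b s n) m * qPoch x q m
        = ∑ k ∈ Finset.range (n+1), rc q a b s n k * qPoch x q (k+1) := by
      rw [show n+2 = (n+1)+1 from rfl, sum_sh (rc q a b s n) (fun m => qPoch x q m) (n+1)]
    rw [rhs_eq, q2, p1]
  rw [hL, hR]
  refine Finset.sum_congr rfl fun m hm => ?_
  have hm' : m < n + 2 := Finset.mem_range.mp hm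
  congr 1
  rcases m with _ | (_ | j)
  · -- m = 0
    simp only [sh_zero, add_zero, sub_zero]
    unfold w1 rc dzr czr
    rw [qPochT_peel (a*q) q (show 0 < n+3 by omega),
        qPochT_peel (b*q) q (show 0 < n+3 by omega)]
    simp only [qPoch_zero, pow_zero]
    field_simp
    ring
  · -- m = 1
    simp only [sh_succ, sh_zero, add_zero]
    unfold w1 w2 rc dzr czr
    rw [qPochT_peel q q (show 0 < n+2 by omega),
        qPochT_peel (a*q) q (show 0 < n+3 by omega),
        qPochT_peel (b*q) q (show 0 < n+3 by omega),
        qPochT_peel (a*q) q (show 1 < n+3 by omega),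
        qPochT_peel (b*q) q (show 1 < n+3 by omega)]
    simp only [qPoch_succ, qPoch_zero, pow_zero, pow_one]
    field_simp
    ring
  · -- m = j+2
    simp only [sh_succ]
    unfold w1 w2 w3 rc dzr czr
    rw [qPochT_peel q q (show j < n+2 by omega),
        qPochT_peel q q (show j+1 < n+2 by omega),
        qPochT_peel (a*q) q (show j+1 < n+3 by omega),
        qPochT_peel (b*q) q (show j+1 < n+3 by omega),
        qPochT_peel (a*q) q (show j+2 < n+3 by omega),
        qPochT_peel (b*q) q (show j+2 < n+3 by omega)]
    simp only [qPoch_succ, pow_succ]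
    field_simp [hqk0 j, hq0]
    ring
lemma multipliable_qfac (q z : ℝ) (hq : 0 < q) (hq1 : q < 1) :
    Multipliable (fun j : ℕ => 1 - z * q ^ j) := by
  obtain ⟨N, hN⟩ : ∃ N : ℕ, q ^ N < 1 / (2 * (|z| + 1)) := by
    refine exists_pow_lt_of_lt_one (by positivity) hq1
  have hzN : |z| * q ^ N ≤ 1 / 2 := by
    have h0 : (0:ℝ) < |z| + 1 := by positivity
    have := mul_le_mul_of_nonneg_left hN.le (le_of_lt h0)
    have h2 : (|z| + 1) * (1 / (2 * (|z| + 1))) = 1/2 := by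
      field_simp
    nlinarith [abs_nonneg z, pow_pos hq N]
  apply Multipliable.comp_nat_add (k := N)
  have key : ∀ n : ℕ, |z * q ^ (n + N)| ≤ (1/2) * q ^ n := by
    intro n
    rw [abs_mul, abs_pow, abs_of_pos hq, pow_add]
    calc |z| * (q ^ n * q ^ N) = (|z| * q ^ N) * q ^ n := by ring
    _ ≤ (1/2) * q ^ n := mul_le_mul_of_nonneg_right hzN (pow_nonneg hq.le n)
  have hpos : ∀ n : ℕ, 0 < 1 - z * q ^ (n + N) := by
    intro n
    have h2 : q ^ n ≤ 1 := pow_le_one₀ hq.le hq1.le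
    have := abs_le.1 (key n)
    nlinarith
  have hsum : Summable (fun n : ℕ => Real.log (1 - z * q ^ (n + N))) := by
    apply Summable.of_abs
    have hg : Summable (fun n : ℕ => q ^ n) := summable_geometric_of_lt_one hq.le hq1
    apply Summable.of_nonneg_of_le (fun n => abs_nonneg _) _ hg
    intro n
    have hkey := key n
    have hqle : q ^ n ≤ 1 := pow_le_one₀ hq.le hq1.le
    set v := z * q ^ (n + N) with hv
    have hqn : (0:ℝ) < q ^ n := pow_pos hq n
    have hva := abs_le.1 hkey
    have hpos' : 0 < 1 - v := hpos n
    have hup : Real.log (1 - v) ≤ (1 - v) - 1 := Real.log_le_sub_one_of_pos hpos'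
    have hinv : Real.log (1 - v)⁻¹ ≤ (1 - v)⁻¹ - 1 :=
      Real.log_le_sub_one_of_pos (by positivity)
    have hlo : -((1 - v)⁻¹ - 1) ≤ Real.log (1 - v) := by
      have h3 := Real.log_inv (1 - v); linarith
    have hva1 := hva.1
    have hva2 := hva.2
    have hhalf : (1:ℝ)/2 ≤ 1 - v := by nlinarith
    have hinv2 : (1 - v)⁻¹ ≤ 2 := by
      rw [inv_le_comm₀ hpos' (by norm_num)]; linarith
    rw [abs_le]
    constructor
    · have heq : 1 - (1-v)⁻¹ = -v * (1-v)⁻¹ := by field_simp; ring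
      have hb : -(q^n) ≤ -v * (1-v)⁻¹ := by
        rcases le_or_gt 0 v with h | h
        · have hv2 : v * (1-v)⁻¹ ≤ v * 2 := mul_le_mul_of_nonneg_left hinv2 h
          nlinarith
        · have h4 : 0 ≤ -v * (1-v)⁻¹ := mul_nonneg (by linarith) (by positivity)
          nlinarith
      nlinarith [hlo]
    · nlinarith [hup]
  exact Real.multipliable_of_summable_log hpos hsum

lemma qPochInf_step (z q : ℝ) (hq : 0 < q) (hq1 : q < 1) :
    qPochInf z q = (1 - z) * qPochInf (q * z) q := by
  rw [qPochInf, tprod_eq_zero_mul' (f := fun j : ℕ => 1 - z * q ^ j)]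
  · simp only [pow_zero, mul_one, qPochInf]
    congr 1
    exact tprod_congr fun n => by ring
  · exact (multipliable_qfac q (q*z) hq hq1).congr fun n => by ring

lemma assemble (q a b x P1 P2 P3 Ab Aa Pq : ℝ) (hq : q ≠ 0) (ha0 : a ≠ 0) (hb0 : b ≠ 0)
    (hx : x ≠ 0) (hq1 : 1 - q ≠ 0) (hx1 : 1 - x ≠ 0) (haq : 1 - a*q ≠ 0) (hbq : 1 - b*q ≠ 0)
    (hstar : (a*q - x)*(b*q - x) * P1 - a*b*q^2*((1-x) * P2) = (1-a*q)*(1-b*q) * (x * P3)) :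
    (a * b * q ^ 2 * (1 - q) / ((1 - a * q) * (1 - b * q)) *
        ((1 - x/(b*q)) * Ab * ((1 - x/(a*q)) * Aa) / ((1-x) * Pq)) * P1
      - a * b * q ^ 2 * (1 - q) / ((1 - a * q) * (1 - b * q)) * (Ab * Aa / Pq) * P2)
      / ((1 - q) * x)
    = Ab * Aa / ((1-x) * Pq) * P3 := by
  have hP3 : P3 = ((a*q - x)*(b*q - x) * P1 - a*b*q^2*((1-x) * P2))
      / ((1-a*q) * ((1-b*q) * x)) := by
    rw [eq_div_iff (mul_ne_zero haq (mul_ne_zero hbq hx))]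
    linear_combination -hstar
  rcases eq_or_ne Pq 0 with h | h
  · simp [h]
  · rw [hP3]
    field_simp

/-- Indefinite q-integral of the weighted big q-Laguerre polynomial. -/
theorem qIntegral_bigQLaguerre (q a b : ℝ) (hq : 0 < q) (hq1 : q < 1)
    (n : ℕ) (hn : 1 ≤ n) (ha0 : a ≠ 0) (hb0 : b ≠ 0)
    (ha : ∀ j : ℕ, 1 ≤ j → a * q ^ j ≠ 1) (hb : ∀ j : ℕ, 1 ≤ j → b * q ^ j ≠ 1) :
    ∀ x : ℝ, 0 < x → (∀ k : ℕ, x * q ^ k ≠ 1) →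
      qDeriv q
        (fun t => (a * b * q ^ 2 * (1 - q) / ((1 - a * q) * (1 - b * q))) *
          (qPochInf (t / (b * q)) q * qPochInf (t / (a * q)) q / qPochInf t q) *
          bigQLaguerre q (a * q) (b * q) (n - 1) t) x
      = (qPochInf (x / b) q * qPochInf (x / a) q / qPochInf x q) *
          bigQLaguerre q a b n x := by
  intro x hx hxk
  have hq0 : q ≠ 0 := ne_of_gt hq
  have hx0 : x ≠ 0 := ne_of_gt hx
  have hq1' : (1:ℝ) - q ≠ 0 := by intro h; linarith
  have hx1 : (1:ℝ) - x ≠ 0 := by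
    have := hxk 0
    simp only [pow_zero, mul_one] at this
    intro h; apply this; linarith
  have haq : (1:ℝ) - a*q ≠ 0 := by
    have := ha 1 le_rfl
    rw [pow_one] at this
    intro h; apply this; linarith
  have hbq : (1:ℝ) - b*q ≠ 0 := by
    have := hb 1 le_rfl
    rw [pow_one] at this
    intro h; apply this; linarith
  have hstar := star q a b x hq hq1 n hn ha hb
  have e1 : qPochInf (x/(b*q)) q = (1 - x/(b*q)) * qPochInf (x/b) q := by
    rw [qPochInf_step _ _ hq hq1, show q*(x/(b*q)) = x/b from by
      field_simp
      try ring]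
  have e2 : qPochInf (x/(a*q)) q = (1 - x/(a*q)) * qPochInf (x/a) q := by
    rw [qPochInf_step _ _ hq hq1, show q*(x/(a*q)) = x/a from by
      field_simp
      try ring]
  have e3 : qPochInf (q*x/(b*q)) q = qPochInf (x/b) q := by
    rw [show q*x/(b*q) = x/b from by field_simp; try ring]
  have e4 : qPochInf (q*x/(a*q)) q = qPochInf (x/a) q := by
    rw [show q*x/(a*q) = x/a from by field_simp; try ring]
  have e5 : qPochInf x q = (1-x) * qPochInf (q*x) q := qPochInf_step x q hq hq1
  unfold qDeriv
  simp only []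
  rw [e1, e2, e3, e4, e5]
  exact assemble q a b x _ _ _ _ _ _ hq0 ha0 hb0 hx0 hq1' hx1 haq hbq hstar
end

section
/- Let 0 < q < 1, let n ≥ 1 be an integer, and set c := 1/(2·ln q). Then for all x > 0, the q-derivative at x of the function G(x) := x^{3/2}·exp(c·(ln(x/q))²)·S_{n−1}(qx; q) / ( q^{1/2}·[n]_q ) equals x^{−1/2}·exp(c·(ln x)²)·S_n(x; q). (This is the indefinite q-integral ∫ x^{−1/2} e^{c ln² x} S_n(x;q) d_q x = x^{3/2} e^{c ln²(x/q)} S_{n−1}(qx;q)/(√q·[n]_q).) -/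
/-- The q-bracket `[n]_q = (1 - qⁿ)/(1 - q)`. -/
noncomputable def qBracketN (q : ℝ) (n : ℕ) : ℝ := (1 - q ^ n) / (1 - q)

/-- The Stieltjes–Wigert polynomial
`S_n(x;q) = (1/(q;q)_n) Σ_{k=0}^n ((q^{−n};q)_k/(q;q)_k) q^{k(k−1)/2} q^{(n+1)k} x^k`. -/
noncomputable def stieltjesWigert (q : ℝ) (n : ℕ) (x : ℝ) : ℝ :=
  (1 / qPoch q q n) * ∑ k ∈ Finset.range (n + 1),
    (qPoch ((q : ℝ) ^ (-(n : ℤ))) q k / qPoch q q k) *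
      q ^ (k * (k - 1) / 2) * q ^ ((n + 1) * k) * x ^ k

namespace SWAux

/-- `D q m k = ∏_{j<k} (q^m - q^j)`, a rescaled version of `(q^{-m}; q)_k`. -/
noncomputable def D (q : ℝ) (m k : ℕ) : ℝ := ∏ j ∈ Finset.range k, (q ^ m - q ^ j)

lemma qPoch_zero (z q : ℝ) : qPoch z q 0 = 1 := Finset.prod_range_zero _

lemma qPoch_succ (z q : ℝ) (k : ℕ) : qPoch z q (k+1) = qPoch z q k * (1 - z * q ^ k) :=
  Finset.prod_range_succ _ _

lemma D_succ (q : ℝ) (m k : ℕ) : D q m (k+1) = D q m k * (q ^ m - q ^ k) :=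
  Finset.prod_range_succ _ _

lemma D_shift (q : ℝ) (m k : ℕ) : D q (m+1) (k+1) = (q^(m+1) - 1) * (q^k * D q m k) := by
  rw [D, Finset.prod_range_succ']
  simp only [pow_zero]
  rw [show (∏ j ∈ Finset.range k, (q^(m+1) - q^(j+1))) =
      ∏ j ∈ Finset.range k, (q * (q^m - q^j)) from Finset.prod_congr rfl (by intro j _; ring),
    Finset.prod_mul_distrib, Finset.prod_const, Finset.card_range, D]
  ring

lemma D_self (q : ℝ) (m : ℕ) : D q m (m+1) = 0 :=
  Finset.prod_eq_zero (Finset.self_mem_range_succ m) (by simp)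

lemma poch_eq (q : ℝ) (hq : q ≠ 0) (m k : ℕ) :
    qPoch ((q : ℝ) ^ (-(m:ℤ))) q k = (q ^ (m*k))⁻¹ * D q m k := by
  induction k with
  | zero => simp [qPoch, D]
  | succ k ih =>
    rw [qPoch_succ, ih, D_succ]
    have h1 : (q:ℝ) ^ (-(m:ℤ)) = (q ^ m)⁻¹ := by rw [zpow_neg, zpow_natCast]
    rw [h1]
    have hm : (q:ℝ)^m ≠ 0 := pow_ne_zero _ hq
    have hmk : (q:ℝ)^(m*k) ≠ 0 := pow_ne_zero _ hq
    have e : (q:ℝ)^(m*(k+1)) = q^(m*k) * q^m := by rw [Nat.mul_succ, pow_add]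
    rw [e, mul_inv]
    field_simp

lemma tri (j : ℕ) : (j+1)*j/2 = j*(j-1)/2 + j := by
  cases j with
  | zero => rfl
  | succ i =>
    rw [Nat.succ_sub_one, show (i+1+1)*(i+1) = (i+1)*i + (i+1)*2 by ring,
      Nat.add_mul_div_right _ _ (by norm_num : (0:ℕ) < 2)]

lemma qPoch_q_pos (q : ℝ) (hq0 : 0 < q) (hq1 : q < 1) (k : ℕ) : 0 < qPoch q q k := by
  apply Finset.prod_pos
  intro j _
  have h : q * q ^ j < 1 := by
    have := pow_lt_one₀ (le_of_lt hq0) hq1 (Nat.succ_ne_zero j)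
    rwa [pow_succ, mul_comm] at this
  linarith

/-- The coefficient recurrence behind `S_{m}(qx) - qx S_m(q²x) = (1-q^{m+1}) S_{m+1}(x)`. -/
lemma coeff (q : ℝ) (hq0 : 0 < q) (hq1 : q < 1) (m j : ℕ) :
    qPoch ((q:ℝ) ^ (-((m+1 : ℕ) : ℤ))) q (j+1) / qPoch q q (j+1) *
        q ^ ((j+1) * ((j+1) - 1) / 2) * q ^ ((m+1+1) * (j+1))
      = q^(j+1) * (qPoch ((q:ℝ) ^ (-(m : ℤ))) q (j+1) / qPoch q q (j+1) *
            q ^ ((j+1) * ((j+1) - 1) / 2) * q ^ ((m+1) * (j+1)))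
        - q^(2*j+1) * (qPoch ((q:ℝ) ^ (-(m : ℤ))) q j / qPoch q q j *
            q ^ (j * (j - 1) / 2) * q ^ ((m+1) * j)) := by
  have hq : q ≠ 0 := ne_of_gt hq0
  have hPj := ne_of_gt (qPoch_q_pos q hq0 hq1 j)
  have hf : (1 : ℝ) - q * q ^ j ≠ 0 := by
    have h : q * q ^ j < 1 := by
      have := pow_lt_one₀ (le_of_lt hq0) hq1 (Nat.succ_ne_zero j)
      rwa [pow_succ, mul_comm] at this
    linarith
  rw [poch_eq q hq (m+1) (j+1), poch_eq q hq m (j+1), poch_eq q hq m j,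
      D_shift, D_succ, qPoch_succ, Nat.add_sub_cancel, tri]
  field_simp
  linear_combination (-(q ^ 2 * (q ^ (m * 2) * q ^ (m * j * 3) * q ^ (j * 4) * q ^ (j * (j - 1) / 2) * D q m j))) * inv_mul_cancel₀ hf

/-- The key forward-shift identity for Stieltjes–Wigert polynomials. -/
lemma key (q : ℝ) (hq0 : 0 < q) (hq1 : q < 1) (m : ℕ) (x : ℝ) :
    stieltjesWigert q m (q*x) - q*x * stieltjesWigert q m (q*(q*x))
      = (1 - q^(m+1)) * stieltjesWigert q (m+1) x := by
  have hq : q ≠ 0 := ne_of_gt hq0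
  have hPm := ne_of_gt (qPoch_q_pos q hq0 hq1 m)
  have hfm : (1:ℝ) - q * q ^ m ≠ 0 := by
    have h : q * q ^ m < 1 := by
      have := pow_lt_one₀ (le_of_lt hq0) hq1 (Nat.succ_ne_zero m)
      rwa [pow_succ, mul_comm] at this
    linarith
  have hsum : (∑ k ∈ Finset.range (m+1),
        qPoch ((q:ℝ) ^ (-(m : ℤ))) q k / qPoch q q k * q ^ (k*(k-1)/2) * q ^ ((m+1)*k) * (q*x)^k)
      - q*x * (∑ k ∈ Finset.range (m+1),
        qPoch ((q:ℝ) ^ (-(m : ℤ))) q k / qPoch q q k * q ^ (k*(k-1)/2) * q ^ ((m+1)*k) * (q*(q*x))^k)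
      = ∑ k ∈ Finset.range (m+1+1),
        qPoch ((q:ℝ) ^ (-((m+1:ℕ) : ℤ))) q k / qPoch q q k * q ^ (k*(k-1)/2) * q ^ ((m+1+1)*k) * x^k := by
    rw [Finset.mul_sum]
    rw [show (∑ k ∈ Finset.range (m+1),
        qPoch ((q:ℝ) ^ (-(m : ℤ))) q k / qPoch q q k * q ^ (k*(k-1)/2) * q ^ ((m+1)*k) * (q*x)^k)
      = ∑ k ∈ Finset.range (m+1+1),
        qPoch ((q:ℝ) ^ (-(m : ℤ))) q k / qPoch q q k * q ^ (k*(k-1)/2) * q ^ ((m+1)*k) * (q*x)^k from by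
        rw [Finset.sum_range_succ (fun k => qPoch ((q:ℝ) ^ (-(m : ℤ))) q k / qPoch q q k *
            q ^ (k*(k-1)/2) * q ^ ((m+1)*k) * (q*x)^k) (m+1),
          poch_eq q hq m (m+1), D_self]; ring]
    rw [Finset.sum_range_succ' _ (m+1), Finset.sum_range_succ'
      (fun k => qPoch ((q:ℝ) ^ (-((m+1:ℕ) : ℤ))) q k / qPoch q q k *
        q ^ (k*(k-1)/2) * q ^ ((m+1+1)*k) * x^k) (m+1)]
    simp only [qPoch_zero, pow_zero, Nat.zero_mul, Nat.mul_zero, Nat.zero_div,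
      div_one, one_mul, mul_one]
    rw [add_sub_right_comm, ← Finset.sum_sub_distrib]
    congr 1
    apply Finset.sum_congr rfl
    intro k _
    linear_combination (-(x^(k+1))) * coeff q hq0 hq1 m k
  unfold stieltjesWigert
  rw [qPoch_succ]
  rw [show (1:ℝ) - q^(m+1) = 1 - q*q^m by rw [pow_succ]; ring, ← hsum]
  field_simp

end SWAux

/-- Indefinite q-integral for Stieltjes–Wigert polynomials:
`∫ x^{−1/2} e^{c ln² x} S_n(x;q) d_q x = x^{3/2} e^{c ln²(x/q)} S_{n−1}(qx;q)/(√q·[n]_q)`,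
where `c = 1/(2 ln q)`. -/
theorem qIntegral_stieltjesWigert (q : ℝ) (hq : 0 < q) (hq1 : q < 1)
    (n : ℕ) (hn : 1 ≤ n) (c : ℝ) (hc : c = 1 / (2 * Real.log q)) :
    ∀ x : ℝ, 0 < x →
      qDeriv q
        (fun t => t ^ ((3 : ℝ) / 2) * Real.exp (c * (Real.log (t / q)) ^ 2) *
          stieltjesWigert q (n - 1) (q * t) / (q ^ ((1 : ℝ) / 2) * qBracketN q n)) x
      = x ^ (-(1 : ℝ) / 2) * Real.exp (c * (Real.log x) ^ 2) * stieltjesWigert q n x := by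
  intro x hx
  obtain ⟨m, rfl⟩ : ∃ m, n = m + 1 := ⟨n - 1, (Nat.succ_pred_eq_of_pos hn).symm⟩
  have hq0 : q ≠ 0 := ne_of_gt hq
  have hx0 : x ≠ 0 := ne_of_gt hx
  have hlq : Real.log q ≠ 0 := ne_of_lt (Real.log_neg hq hq1)
  simp only [qDeriv, Nat.add_sub_cancel]
  have hexp : Real.exp (c * Real.log (x / q) ^ 2)
      = Real.exp (c * Real.log x ^ 2) * x⁻¹ * q ^ ((1:ℝ)/2) := by
    rw [Real.log_div hx0 hq0]
    have harg : c * (Real.log x - Real.log q)^2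
        = c * Real.log x ^ 2 + (- Real.log x) + Real.log q * (1/2) := by
      rw [hc]; field_simp; ring
    rw [harg, Real.exp_add, Real.exp_add, Real.exp_neg, Real.exp_log hx,
        ← Real.rpow_def_of_pos hq]
  have hexp2 : Real.log (q * x / q) = Real.log x := by
    rw [mul_comm, mul_div_assoc, div_self hq0, mul_one]
  have h32 : x ^ ((3:ℝ)/2) = x ^ (-(1:ℝ)/2) * (x * x) := by
    rw [show x * x = x ^ (2:ℝ) by
        rw [show (2:ℝ) = ((2:ℕ):ℝ) by norm_num, Real.rpow_natCast]; ring,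
      ← Real.rpow_add hx]
    norm_num
  have hqx32 : (q*x) ^ ((3:ℝ)/2) = (q ^ ((1:ℝ)/2) * q) * (x ^ (-(1:ℝ)/2) * (x*x)) := by
    rw [Real.mul_rpow (le_of_lt hq) (le_of_lt hx), h32]
    congr 1
    rw [show q ^ ((1:ℝ)/2) * q = q ^ ((1:ℝ)/2) * q ^ (1:ℝ) by rw [Real.rpow_one],
        ← Real.rpow_add hq]
    norm_num
  have h1mq : (1:ℝ) - q^(m+1) ≠ 0 := by
    have h2 : q ^ (m+1) < 1 := pow_lt_one₀ (le_of_lt hq) hq1 (by omega)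
    intro h; linarith
  have h1q : (1:ℝ) - q ≠ 0 := by intro h; linarith
  have hS : stieltjesWigert q (m+1) x
      = (stieltjesWigert q m (q*x) - q*x*stieltjesWigert q m (q*(q*x))) / (1 - q^(m+1)) := by
    rw [SWAux.key q hq hq1 m x]
    field_simp
  rw [hS, hexp, hexp2, h32, hqx32, qBracketN]
  have hq12 : q ^ ((1:ℝ)/2) ≠ 0 := ne_of_gt (Real.rpow_pos_of_pos hq _)
  have hxm12 : x ^ (-(1:ℝ)/2) ≠ 0 := ne_of_gt (Real.rpow_pos_of_pos hx _)
  field_simp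
end
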